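/- arXiv:1609.06286 — 3 statements merged into one kernel-verified Lean document; each statement's English description precedes it below -/
import Mathlib

section
/- Let $0 < \lambda < 1$, $\mu > 0$, and $\beta \geq 0$. Then there exists a constant $C > 0$ such that for all $t \geq 0$, $e^{-\frac{\mu}{1-\lambda}(1+t)^{1-\lambda}} \int_0^t (1+\tau)^{-\beta} e^{\frac{\mu}{1-\lambda}(1+\tau)^{1-\lambda}}\,d\tau \leq C(1+t)^{-\beta+\lambda}$. -/
open intervalIntegral Real

private lemma aux_cont6 (p : ℝ) {s : Set ℝ} (hs : ∀ x ∈ s, (0:ℝ) < 1 + x) :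
    ContinuousOn (fun τ : ℝ => (1 + τ) ^ p) s :=
  ContinuousOn.rpow_const (by fun_prop) (fun x hx => Or.inl (hs x hx).ne')

private lemma aux_deriv6 (p : ℝ) {x : ℝ} (hx : (0:ℝ) < 1 + x) :
    HasDerivAt (fun s : ℝ => (1 + s) ^ p) (p * (1 + x) ^ (p - 1)) x := by
  simpa [Function.comp_def] using (Real.hasDerivAt_rpow_const (x := 1 + x) (p := p)
    (Or.inl hx.ne')).comp x ((hasDerivAt_id x).const_add 1)

theorem stmt_6 (lam μ β : ℝ) (hlam0 : 0 < lam) (hlam1 : lam < 1) (hμ : 0 < μ) (hβ : 0 ≤ β) :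
    ∃ C > (0:ℝ), ∀ t ≥ (0:ℝ),
      Real.exp (-(μ / (1 - lam)) * (1 + t) ^ (1 - lam)) *
          ∫ τ in (0:ℝ)..t, (1 + τ) ^ (-β) * Real.exp ((μ / (1 - lam)) * (1 + τ) ^ (1 - lam))
        ≤ C * (1 + t) ^ (-β + lam) := by
  have h1l : (0:ℝ) < 1 - lam := by linarith
  set a := μ / (1 - lam) with ha
  have ha0 : 0 < a := div_pos hμ h1l
  have haμ : a * (1 - lam) = μ := div_mul_cancel₀ _ h1l.ne'
  clear_value a
  set E : ℝ → ℝ := fun τ => Real.exp (a * (1 + τ) ^ (1 - lam)) with hE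
  set g : ℝ → ℝ := fun τ => (1 + τ) ^ (-β) * E τ with hg
  set h : ℝ → ℝ := fun τ => (1 + τ) ^ (lam - β) * E τ with hh
  set D : ℝ → ℝ := fun τ => E τ * ((lam - β) * (1 + τ) ^ (lam - β - 1) + μ * (1 + τ) ^ (-β))
    with hD
  -- positivity facts
  have hEpos : ∀ x : ℝ, 0 < E x := by
    intro x; simp only [hE]; exact Real.exp_pos _
  have hE1 : ∀ x : ℝ, 0 ≤ x → 1 ≤ E x := by
    intro x hx
    simp only [hE]
    exact Real.one_le_exp (mul_nonneg ha0.le (Real.rpow_nonneg (by linarith) _))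
  have hgpos : ∀ x : ℝ, 0 ≤ x → 0 < g x := by
    intro x hx
    have hx1 : (0:ℝ) < 1 + x := by linarith
    simp only [hg]
    exact mul_pos (Real.rpow_pos_of_pos hx1 _) (hEpos x)
  have hhpos : ∀ x : ℝ, 0 ≤ x → 0 < h x := by
    intro x hx
    have hx1 : (0:ℝ) < 1 + x := by linarith
    simp only [hh]
    exact mul_pos (Real.rpow_pos_of_pos hx1 _) (hEpos x)
  -- derivative of h
  have hDeriv : ∀ x : ℝ, 0 ≤ x → HasDerivAt h (D x) x := by
    intro x hx
    have hx1 : (0:ℝ) < 1 + x := by linarith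
    have hEd : HasDerivAt E (E x * (a * ((1 - lam) * (1 + x) ^ (1 - lam - 1)))) x := by
      have h1 := (aux_deriv6 (1 - lam) hx1).const_mul a
      have h2 := (Real.hasDerivAt_exp (a * (1 + x) ^ (1 - lam))).comp x h1
      simp only [hE]
      simpa [Function.comp_def, mul_comm, mul_assoc, mul_left_comm] using h2
    have hmul := (aux_deriv6 (lam - β) hx1).mul hEd
    have hsplit : (1 + x) ^ (-β) = (1 + x) ^ (lam - β) * (1 + x) ^ (1 - lam - 1) := by
      rw [← Real.rpow_add hx1]; ring_nf
    have heq : D x = (lam - β) * (1 + x) ^ (lam - β - 1) * E x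
        + (1 + x) ^ (lam - β) * (E x * (a * ((1 - lam) * (1 + x) ^ (1 - lam - 1)))) := by
      simp only [hD]
      rw [hsplit, ← haμ]
      ring
    rw [hh, heq]
    exact hmul
  -- continuity / integrability
  have hposIcc : ∀ u v : ℝ, 0 ≤ u → 0 ≤ v → ∀ x ∈ Set.uIcc u v, (0:ℝ) < 1 + x := by
    intro u v hu hv x hx
    rcases Set.mem_uIcc.mp hx with ⟨h1, _⟩ | ⟨h1, _⟩ <;> linarith
  have hEc : ∀ {s : Set ℝ}, (∀ x ∈ s, (0:ℝ) < 1 + x) → ContinuousOn E s := by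
    intro s hs
    rw [hE]
    exact Real.continuous_exp.comp_continuousOn (continuousOn_const.mul (aux_cont6 (1 - lam) hs))
  have hgInt : ∀ u v : ℝ, 0 ≤ u → 0 ≤ v → IntervalIntegrable g MeasureTheory.volume u v := by
    intro u v hu hv
    rw [hg]
    exact ((aux_cont6 (-β) (hposIcc u v hu hv)).mul
      (hEc (hposIcc u v hu hv))).intervalIntegrable
  have hDInt : ∀ u v : ℝ, 0 ≤ u → 0 ≤ v → IntervalIntegrable D MeasureTheory.volume u v := by
    intro u v hu hv
    rw [hD]
    exact ((hEc (hposIcc u v hu hv)).mul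
      ((continuousOn_const.mul (aux_cont6 (lam - β - 1) (hposIcc u v hu hv))).add
        (continuousOn_const.mul (aux_cont6 (-β) (hposIcc u v hu hv))))).intervalIntegrable
  clear_value E g h D
  -- threshold T
  set M : ℝ := max (2 * (|lam - β| + 1) / μ) 1 with hM
  have hM1 : (1:ℝ) ≤ M := le_max_right _ _
  have hMb : 2 * (|lam - β| + 1) / μ ≤ M := le_max_left _ _
  set T : ℝ := M ^ (1 - lam)⁻¹ - 1 with hTdef
  have h1T : 1 + T = M ^ (1 - lam)⁻¹ := by rw [hTdef]; ring
  have h1T1 : (1:ℝ) ≤ 1 + T := by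
    rw [h1T]; exact Real.one_le_rpow hM1 (by positivity)
  have hT0 : (0:ℝ) ≤ T := by linarith
  have hTM : (1 + T) ^ (1 - lam) = M := by
    rw [h1T]; exact Real.rpow_inv_rpow (by linarith) h1l.ne'
  clear_value M T
  -- key pointwise bound for x ≥ T
  have hkey : ∀ x : ℝ, T ≤ x → g x ≤ (2 / μ) * D x := by
    intro x hx
    have hx0 : (0:ℝ) ≤ x := le_trans hT0 hx
    have hx1 : (0:ℝ) < 1 + x := by linarith
    have hP : (0:ℝ) < (1 + x) ^ (1 - lam) := Real.rpow_pos_of_pos hx1 _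
    have h1 : M ≤ (1 + x) ^ (1 - lam) := by
      rw [← hTM]; exact Real.rpow_le_rpow (by linarith) (by linarith) h1l.le
    have h2 : (1 + x) ^ (lam - 1) = ((1 + x) ^ (1 - lam))⁻¹ := by
      rw [← Real.rpow_neg hx1.le]; ring_nf
    have h6 : 2 * (|lam - β| + 1) ≤ μ * (1 + x) ^ (1 - lam) := by
      calc 2 * (|lam - β| + 1) = μ * (2 * (|lam - β| + 1) / μ) := by field_simp
        _ ≤ μ * M := by exact mul_le_mul_of_nonneg_left hMb hμ.le
        _ ≤ μ * (1 + x) ^ (1 - lam) := by exact mul_le_mul_of_nonneg_left h1 hμ.le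
    have h4 : 2 * (|lam - β| + 1) * (1 + x) ^ (lam - 1) ≤ μ := by
      rw [h2, ← div_eq_mul_inv, div_le_iff₀ hP]; linarith
    have hL0 : (0:ℝ) ≤ (1 + x) ^ (lam - 1) := (Real.rpow_pos_of_pos hx1 _).le
    have hbr : μ / 2 ≤ (lam - β) * (1 + x) ^ (lam - 1) + μ := by
      have hprod := mul_le_mul_of_nonneg_right (neg_abs_le (lam - β)) hL0
      nlinarith
    have hP1 : (1 + x) ^ (lam - β - 1) = (1 + x) ^ (-β) * (1 + x) ^ (lam - 1) := by
      rw [← Real.rpow_add hx1]; ring_nf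
    have hQ : (0:ℝ) < (1 + x) ^ (-β) := Real.rpow_pos_of_pos hx1 _
    have hQE : (0:ℝ) ≤ (1 + x) ^ (-β) * E x := mul_nonneg hQ.le (hEpos x).le
    simp only [hg, hD]
    rw [hP1]
    calc (1 + x) ^ (-β) * E x = (2 / μ) * ((1 + x) ^ (-β) * E x * (μ / 2)) := by
          field_simp
      _ ≤ (2 / μ) * ((1 + x) ^ (-β) * E x * ((lam - β) * (1 + x) ^ (lam - 1) + μ)) := by
          apply mul_le_mul_of_nonneg_left _ (by positivity)
          exact mul_le_mul_of_nonneg_left hbr hQE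
      _ = (2 / μ) * (E x * ((lam - β) * ((1 + x) ^ (-β) * (1 + x) ^ (lam - 1))
            + μ * (1 + x) ^ (-β))) := by ring
  -- constants
  set I : ℝ := ∫ τ in (0:ℝ)..T, g τ with hI
  have hI0 : 0 ≤ I := by
    rw [hI]
    exact intervalIntegral.integral_nonneg hT0 (fun u hu => (hgpos u hu.1).le)
  clear_value I
  set m : ℝ := min 1 ((1 + T) ^ (lam - β)) with hm
  have hm0 : 0 < m := by
    rw [hm]
    exact lt_min one_pos (Real.rpow_pos_of_pos (by linarith) _)
  clear_value m
  set C : ℝ := 2 / μ + I / h T + I / m + 1 with hC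
  have hhTpos : 0 < h T := hhpos T hT0
  have hC0 : 0 < C := by rw [hC]; positivity
  clear_value C
  refine ⟨C, hC0, ?_⟩
  intro t ht
  have ht1 : (0:ℝ) < 1 + t := by linarith
  -- main estimate : ∫_0^t g ≤ C * h t
  have hmain : (∫ τ in (0:ℝ)..t, g τ) ≤ C * h t := by
    have hhtpos : 0 < h t := hhpos t ht
    rcases le_total t T with hcase | hcase
    · -- small t
      have hsplit : (∫ τ in (0:ℝ)..t, g τ) + (∫ τ in t..T, g τ) = I := by
        rw [hI]
        exact intervalIntegral.integral_add_adjacent_intervals (hgInt 0 t le_rfl ht)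
          (hgInt t T ht hT0)
      have h2 : 0 ≤ ∫ τ in t..T, g τ :=
        intervalIntegral.integral_nonneg hcase (fun u hu => (hgpos u (le_trans ht hu.1)).le)
      have h3 : (∫ τ in (0:ℝ)..t, g τ) ≤ I := by linarith
      have hmh : m ≤ h t := by
        have h5 : (1 + t) ^ (lam - β) ≤ h t := by
          simp only [hh]
          nlinarith [Real.rpow_pos_of_pos ht1 (lam - β), hE1 t ht]
        rcases le_total 0 (lam - β) with hs | hs
        · have h6 : (1:ℝ) ≤ (1 + t) ^ (lam - β) := Real.one_le_rpow (by linarith) hs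
          have h7 : m ≤ 1 := by rw [hm]; exact min_le_left _ _
          linarith
        · have h6 : (1 + T) ^ (lam - β) ≤ (1 + t) ^ (lam - β) :=
            Real.rpow_le_rpow_of_nonpos ht1 (by linarith) hs
          have h7 : m ≤ (1 + T) ^ (lam - β) := by rw [hm]; exact min_le_right _ _
          linarith
      have h7 : I ≤ (I / m) * h t := by
        rw [div_mul_eq_mul_div, le_div_iff₀ hm0]
        exact mul_le_mul_of_nonneg_left hmh hI0
      have h8 : (I / m) * h t ≤ C * h t := by
        apply mul_le_mul_of_nonneg_right _ hhtpos.le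
        rw [hC]
        have h9 : 0 ≤ I / h T := by positivity
        have h10 : 0 ≤ 2 / μ := by positivity
        linarith
      exact h3.trans (h7.trans h8)
    · -- large t
      have hsplit : I + (∫ τ in T..t, g τ) = ∫ τ in (0:ℝ)..t, g τ := by
        rw [hI]
        exact intervalIntegral.integral_add_adjacent_intervals (hgInt 0 T le_rfl hT0)
          (hgInt T t hT0 ht)
      have hFTC : (∫ τ in T..t, D τ) = h t - h T := by
        apply intervalIntegral.integral_eq_sub_of_hasDerivAt
        · intro x hx
          rcases Set.mem_uIcc.mp hx with ⟨h1, _⟩ | ⟨h1, _⟩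
          · exact hDeriv x (le_trans hT0 h1)
          · exact hDeriv x (le_trans ht h1)
        · exact hDInt T t hT0 ht
      have hmono : (∫ τ in T..t, g τ) ≤ (2 / μ) * (h t - h T) := by
        rw [← hFTC, ← intervalIntegral.integral_const_mul]
        apply intervalIntegral.integral_mono_on hcase (hgInt T t hT0 ht)
          ((hDInt T t hT0 ht).const_mul _)
        exact fun x hx => hkey x hx.1
      have hint0 : 0 ≤ ∫ τ in T..t, g τ :=
        intervalIntegral.integral_nonneg hcase (fun u hu => (hgpos u (le_trans hT0 hu.1)).le)
      have hhmono : h T ≤ h t := by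
        have h2μ : (0:ℝ) < 2 / μ := by positivity
        have := (mul_nonneg_iff_of_pos_left h2μ).mp (le_trans hint0 hmono)
        linarith
      have h7 : I ≤ (I / h T) * h t := by
        rw [div_mul_eq_mul_div, le_div_iff₀ hhTpos]
        exact mul_le_mul_of_nonneg_left hhmono hI0
      have h8 : (2 / μ) * (h t - h T) ≤ (2 / μ) * h t := by
        apply mul_le_mul_of_nonneg_left _ (by positivity)
        linarith
      have h9 : (I / h T) * h t + (2 / μ) * h t ≤ C * h t := by
        apply le_of_sub_nonneg
        have h10 : C * h t - ((I / h T) * h t + (2 / μ) * h t) = (I / m + 1) * h t := by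
          rw [hC]; ring
        rw [h10]
        positivity
      linarith
  -- conclude
  have hEt : Real.exp (-a * (1 + t) ^ (1 - lam)) * E t = 1 := by
    simp only [hE, ← Real.exp_add]
    rw [show -a * (1 + t) ^ (1 - lam) + a * (1 + t) ^ (1 - lam) = 0 by ring]
    exact Real.exp_zero
  have hexp : (0:ℝ) ≤ Real.exp (-a * (1 + t) ^ (1 - lam)) := (Real.exp_pos _).le
  have hfin := mul_le_mul_of_nonneg_left hmain hexp
  have hrw : Real.exp (-a * (1 + t) ^ (1 - lam)) * (C * h t) = C * (1 + t) ^ (-β + lam) := by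
    simp only [hh]
    rw [show (-β + lam) = lam - β by ring]
    calc Real.exp (-a * (1 + t) ^ (1 - lam)) * (C * ((1 + t) ^ (lam - β) * E t))
        = C * (1 + t) ^ (lam - β) * (Real.exp (-a * (1 + t) ^ (1 - lam)) * E t) := by ring
      _ = C * (1 + t) ^ (lam - β) := by rw [hEt]; ring
  rw [← hrw]
  exact hfin
end

section
/- Let $0 < \lambda < 1$, $\mu > 0$, $C_1 > 0$, and $\beta > \lambda$. Suppose $y: [0,\infty) \to [0,\infty)$ is continuously differentiable and satisfies $y'(t) + \frac{\mu}{(1+t)^{\lambda}} y(t) \leq C_1 (1+t)^{-\beta}$ for all $t \geq 0$. Then there exists $C > 0$ (depending on $\lambda, \mu, \beta, C_1, y(0)$) such that $y(t) \leq C(1+t)^{-\beta+\lambda}$ for all $t \geq 0$. -/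
lemma aux_nonpos (f f' : ℝ → ℝ) (a : ℝ)
    (hd : ∀ t ≥ a, HasDerivAt f (f' t) t)
    (hfa : f a ≤ 0) (h : ∀ t ≥ a, 0 ≤ f t → f' t ≤ 0) :
    ∀ t ≥ a, f t ≤ 0 := by
  intro t₀ ht₀
  by_contra hpos
  push_neg at hpos
  set S : Set ℝ := {t | t ∈ Set.Icc a t₀ ∧ f t ≤ 0} with hS
  have hSne : a ∈ S := ⟨⟨le_refl a, ht₀⟩, hfa⟩
  have hbdd : BddAbove S := ⟨t₀, fun x hx => hx.1.2⟩
  set s := sSup S with hs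
  have hsmem : s ∈ Set.Icc a t₀ :=
    ⟨le_csSup hbdd hSne, csSup_le ⟨a, hSne⟩ (fun x hx => hx.1.2)⟩
  have hfs : f s ≤ 0 := by
    by_contra hfs
    push_neg at hfs
    have hc : ContinuousAt f s := (hd s hsmem.1).continuousAt
    rw [Metric.continuousAt_iff] at hc
    obtain ⟨δ, hδ, hcδ⟩ := hc (f s) hfs
    obtain ⟨x, hxS, hx⟩ := exists_lt_of_lt_csSup ⟨a, hSne⟩ (by linarith : s - δ < s)
    have hxle : x ≤ s := le_csSup hbdd hxS
    have : dist x s < δ := by rw [Real.dist_eq, abs_of_nonpos (by linarith)]; linarith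
    have h2 := hcδ this
    rw [Real.dist_eq] at h2
    have h3 := abs_lt.1 h2
    have h4 := hxS.2
    linarith [h3.1]
  have hslt : s < t₀ := lt_of_le_of_ne hsmem.2 (fun h => hpos.not_ge (h ▸ hfs))
  have hanti : AntitoneOn f (Set.Icc s t₀) := by
    apply antitoneOn_of_deriv_nonpos (convex_Icc s t₀)
    · exact fun x hx => ((hd x (hsmem.1.trans hx.1)).continuousAt).continuousWithinAt
    · intro x hx
      rw [interior_Icc] at hx
      exact ((hd x (hsmem.1.trans hx.1.le)).differentiableAt).differentiableWithinAt
    · intro x hx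
      rw [interior_Icc] at hx
      have hxa : a ≤ x := hsmem.1.trans hx.1.le
      have hfx : 0 < f x := by
        by_contra hle
        push_neg at hle
        have : x ∈ S := ⟨⟨hxa, hx.2.le⟩, hle⟩
        exact absurd (le_csSup hbdd this) (not_le.2 hx.1)
      rw [(hd x hxa).deriv]
      exact h x hxa hfx.le
  have := hanti ⟨le_rfl, hslt.le⟩ ⟨hslt.le, le_rfl⟩ hslt.le
  linarith

theorem stmt_15 (lam μ C₁ β : ℝ) (hlam0 : 0 < lam) (hlam1 : lam < 1) (hμ : 0 < μ)
    (hC₁ : 0 < C₁) (hβ : lam < β)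
    (y y' : ℝ → ℝ) (hy0 : ∀ t ≥ (0:ℝ), 0 ≤ y t)
    (hderiv : ∀ t ≥ (0:ℝ), HasDerivAt y (y' t) t)
    (hcont : Continuous y')
    (hineq : ∀ t ≥ (0:ℝ), y' t + μ / (1 + t) ^ lam * y t ≤ C₁ * (1 + t) ^ (-β)) :
    ∃ C > (0:ℝ), ∀ t ≥ (0:ℝ), y t ≤ C * (1 + t) ^ (-β + lam) := by
  -- choose T with (β-lam)(1+t)^(lam-1) ≤ μ/2 for t ≥ T
  set A : ℝ := 2 * (β - lam) / μ with hA
  have hApos : 0 < A := div_pos (by linarith) hμ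
  set T : ℝ := A ^ ((1:ℝ) / (1 - lam)) with hT
  have hTpos : 0 < T := Real.rpow_pos_of_pos hApos _
  have hTkey : ∀ t ≥ T, (β - lam) * (1 + t) ^ (lam - 1) ≤ μ / 2 := by
    intro t ht
    have h1t : (0:ℝ) < 1 + t := by linarith
    have hbase : (1:ℝ) + t ≥ A ^ ((1:ℝ)/(1-lam)) := by
      have : (0:ℝ) < A ^ ((1:ℝ)/(1-lam)) := Real.rpow_pos_of_pos hApos _
      linarith
    have h2 : A ≤ (1 + t) ^ (1 - lam) := by
      have := Real.rpow_le_rpow (Real.rpow_pos_of_pos hApos ((1:ℝ)/(1-lam))).le hbase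
        (by linarith : (0:ℝ) ≤ 1 - lam)
      rwa [← Real.rpow_mul hApos.le, one_div,
        inv_mul_cancel₀ (by linarith : (1:ℝ) - lam ≠ 0), Real.rpow_one] at this
    have hQ : (1 + t) ^ (lam - 1) = ((1 + t) ^ ((1:ℝ) - lam))⁻¹ := by
      rw [← Real.rpow_neg h1t.le]; ring_nf
    rw [hQ]
    have hP : (0:ℝ) < (1 + t) ^ ((1:ℝ) - lam) := Real.rpow_pos_of_pos h1t _
    rw [hA] at h2
    have hβl : (0:ℝ) < β - lam := by linarith
    rw [mul_inv_le_iff₀ hP] -- (β-lam) ≤ μ/2 * (1+t)^(1-lam)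
    have : μ / 2 * (2 * (β - lam) / μ) ≤ μ / 2 * (1 + t) ^ ((1:ℝ) - lam) := by
      apply mul_le_mul_of_nonneg_left h2 (by positivity)
    calc β - lam = μ / 2 * (2 * (β - lam) / μ) := by field_simp
    _ ≤ _ := this
  -- bound y on [0,T]
  have hcy : ContinuousOn y (Set.Icc 0 T) :=
    fun x hx => ((hderiv x hx.1).continuousAt).continuousWithinAt
  obtain ⟨M, hM⟩ := (isCompact_Icc).exists_bound_of_continuousOn hcy
  set C : ℝ := max (2*C₁/μ) ((M+1) * (1+T)^(β-lam)) with hCdef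
  have hCpos : 0 < C := lt_of_lt_of_le (by positivity) (le_max_left _ _)
  have hCa : 2*C₁/μ ≤ C := le_max_left _ _
  have hCb : (M+1) * (1+T)^(β-lam) ≤ C := le_max_right _ _
  have hCmu : 2*C₁ ≤ C * μ := (div_le_iff₀ hμ).mp hCa
  have h1T : (0:ℝ) < 1 + T := by linarith
  -- claim on [0,T]
  have hIcc : ∀ t ∈ Set.Icc (0:ℝ) T, y t ≤ C * (1+t)^(lam-β) := by
    intro t ht
    have h1t : (0:ℝ) < 1+t := by linarith [ht.1]
    have hyM : y t ≤ M := le_trans (le_abs_self _) (hM t ht)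
    have hmono : (1+T)^(lam-β) ≤ (1+t)^(lam-β) :=
      Real.rpow_le_rpow_of_nonpos h1t (by linarith [ht.2]) (by linarith)
    have hcancel : (1+T)^(β-lam) * (1+T)^(lam-β) = 1 := by
      rw [← Real.rpow_add h1T]
      norm_num
    have hs1 : ((M+1)*(1+T)^(β-lam)) * (1+T)^(lam-β) ≤ C * (1+t)^(lam-β) := by
      apply mul_le_mul hCb hmono (Real.rpow_pos_of_pos h1T _).le hCpos.le
    have hs2 : ((M+1)*(1+T)^(β-lam)) * (1+T)^(lam-β) = M+1 := by
      rw [mul_assoc, hcancel, mul_one]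
    linarith
  -- barrier on [T,∞)
  have hbar : ∀ t ≥ T, y t ≤ C * (1+t)^(lam-β) := by
    set p : ℝ := lam - β with hp
    have hzd : ∀ t ≥ T, HasDerivAt (fun s => C * (1+s)^p) (C * (p * (1+t)^(p-1))) t := by
      intro t ht
      have h1t : (0:ℝ) < 1+t := by linarith [hTpos]
      have h1 : HasDerivAt (fun s : ℝ => 1+s) 1 t := (hasDerivAt_id t).const_add 1
      have h2 := (Real.hasDerivAt_rpow_const (x := 1+t) (p := p) (Or.inl h1t.ne')).comp t h1
      have h3 : HasDerivAt (fun s : ℝ => (1+s)^p) (p * (1+t)^(p-1)) t := by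
        rw [mul_one] at h2
        exact h2
      exact h3.const_mul C
    have key := aux_nonpos (fun t => y t - C * (1+t)^p)
      (fun t => y' t - C * (p * (1+t)^(p-1))) T
      (fun t ht => (hderiv t (le_trans hTpos.le ht)).sub (hzd t ht))
      (by
        have := hIcc T ⟨hTpos.le, le_rfl⟩
        simpa [sub_nonpos] using this)
      ?_
    · intro t ht
      have h : y t - C * (1+t)^p ≤ 0 := key t ht
      linarith
    · intro t ht hFt
      have ht0 : (0:ℝ) ≤ t := le_trans hTpos.le ht
      have h1t : (0:ℝ) < 1+t := by linarith
      have hFt' : (0:ℝ) ≤ y t - C * (1+t)^p := hFt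
      have hyz : C * (1+t)^p ≤ y t := by linarith
      have hi := hineq t ht0
      have hk := hTkey t ht
      have hPpos : (0:ℝ) < (1+t)^(-β) := Real.rpow_pos_of_pos h1t _
      have hQpos : (0:ℝ) < (1+t)^(lam-1) := Real.rpow_pos_of_pos h1t _
      have hlamPos : (0:ℝ) < (1+t)^lam := Real.rpow_pos_of_pos h1t lam
      have e1 : (1+t)^(p-1) = (1+t)^(-β) * (1+t)^(lam-1) := by
        rw [← Real.rpow_add h1t]
        congr 1
        rw [hp]; ring
      have e2 : (1+t)^p / (1+t)^lam = (1+t)^(-β) := by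
        rw [← Real.rpow_sub h1t]
        congr 1
        rw [hp]; ring
      have h3 : μ * C * (1+t)^(-β) ≤ μ / (1+t)^lam * y t := by
        have hh := mul_le_mul_of_nonneg_left hyz (le_of_lt (div_pos hμ hlamPos))
        have heq : μ / (1+t)^lam * (C * (1+t)^p) = μ * C * ((1+t)^p / (1+t)^lam) := by
          ring
        rw [heq, e2] at hh
        exact hh
      -- main estimate
      have h5 : C * (1+t)^(-β) * ((β-lam) * (1+t)^(lam-1)) ≤ C * (1+t)^(-β) * (μ/2) :=
        mul_le_mul_of_nonneg_left hk (by positivity)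
      have h6 : (2*C₁) * (1+t)^(-β) ≤ (C*μ) * (1+t)^(-β) :=
        mul_le_mul_of_nonneg_right hCmu hPpos.le
      show y' t - C * (p * (1+t)^(p-1)) ≤ 0
      rw [e1, hp]
      nlinarith [h5, h6, hi, h3]
  refine ⟨C, hCpos, ?_⟩
  intro t ht
  have hrw : (-β + lam) = lam - β := by ring
  rw [hrw]
  rcases le_total t T with h | h
  · exact hIcc t ⟨ht, h⟩
  · exact hbar t h
end

section
/- Let $n \geq 1$, $0 < \lambda < 1$, $\mu > 0$, and set $t_\xi$ by $|\xi| = \frac{\mu}{4}(1+t_\xi)^{-\lambda}$ for $0 < |\xi| \leq \frac{\mu}{4}$, i.e., $1 + t_\xi = (\tfrac{4}{\mu}|\xi|)^{-1/\lambda}$. Let $\alpha \geq 0$ and $C_0 > 0$. Then there exists $C > 0$ such that for all $t \geq 0$, $e^{-C_0(1+t)^{1-\lambda}}\int_{\{\frac{\mu}{4}(1+t)^{-\lambda} \leq |\xi| \leq 1\}} |\xi|^{\alpha} e^{C_0(1-|\xi|^2)(1+t_\xi)^{1-\lambda}}\,d\xi \leq C(1+t)^{-(1-\lambda)(n+\alpha)/2}$.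 -/
open MeasureTheory

lemma aux_rpow_le_exp (α : ℝ) (hα : 0 ≤ α) :
    ∃ K > (0:ℝ), ∀ x : ℝ, 0 ≤ x → x ^ α ≤ K * Real.exp (x ^ 2 / 2) := by
  set m : ℕ := ⌈α / 2⌉₊ with hm
  have hαm : α ≤ 2 * m := by
    have := Nat.le_ceil (α / 2)
    nlinarith [this]
  refine ⟨max 1 (2 ^ m * (m.factorial : ℝ)), lt_of_lt_of_le one_pos (le_max_left _ _), ?_⟩
  intro x hx
  rcases le_or_gt x 1 with hx1 | hx1
  · calc x ^ α ≤ 1 := Real.rpow_le_one hx hx1 hα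
      _ ≤ max 1 (2 ^ m * (m.factorial : ℝ)) * 1 := by
          rw [mul_one]; exact le_max_left _ _
      _ ≤ _ := by
          have : (1:ℝ) ≤ Real.exp (x ^ 2 / 2) := Real.one_le_exp (by positivity)
          have h0 : (0:ℝ) ≤ max 1 (2 ^ m * (m.factorial : ℝ)) :=
            le_trans zero_le_one (le_max_left _ _)
          exact mul_le_mul_of_nonneg_left this h0
  · have h1 : x ^ α ≤ x ^ ((2 * m : ℕ) : ℝ) := by
      apply Real.rpow_le_rpow_of_exponent_le hx1.le
      exact_mod_cast hαm
    rw [Real.rpow_natCast] at h1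
    have h2 : (x ^ 2 / 2) ^ m / (m.factorial : ℝ) ≤ Real.exp (x ^ 2 / 2) :=
      Real.pow_div_factorial_le_exp (x := x ^ 2 / 2) (by positivity) m
    have h3 : x ^ (2 * m) = 2 ^ m * (x ^ 2 / 2) ^ m := by
      rw [pow_mul, div_pow, mul_div_cancel₀]
      positivity
    have hfm : (0:ℝ) < (m.factorial : ℝ) := by exact_mod_cast m.factorial_pos
    calc x ^ α ≤ x ^ (2 * m) := h1
      _ = 2 ^ m * (x ^ 2 / 2) ^ m := h3
      _ ≤ 2 ^ m * ((m.factorial : ℝ) * Real.exp (x ^ 2 / 2)) := by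
          apply mul_le_mul_of_nonneg_left _ (by positivity)
          rw [div_le_iff₀ hfm] at h2
          linarith [h2]
      _ = 2 ^ m * (m.factorial : ℝ) * Real.exp (x ^ 2 / 2) := by ring
      _ ≤ max 1 (2 ^ m * (m.factorial : ℝ)) * Real.exp (x ^ 2 / 2) :=
          mul_le_mul_of_nonneg_right (le_max_right _ _) (Real.exp_nonneg _)

lemma aux_gaussian_integrable (n : ℕ) {b : ℝ} (hb : 0 < b) :
    Integrable (fun ξ : EuclideanSpace ℝ (Fin n) => Real.exp (-b * ‖ξ‖ ^ 2)) := by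
  have h := (GaussianFourier.integrable_cexp_neg_mul_sq_norm_add
    (V := EuclideanSpace ℝ (Fin n)) (b := (b:ℂ)) (by simpa using hb) 0 0).norm
  have heq : (fun ξ : EuclideanSpace ℝ (Fin n) => Real.exp (-b * ‖ξ‖ ^ 2)) =
      fun ξ : EuclideanSpace ℝ (Fin n) =>
        ‖Complex.exp (-(b:ℂ) * ‖ξ‖ ^ 2 +
          0 * ((inner ℝ (0 : EuclideanSpace ℝ (Fin n)) ξ : ℝ) : ℂ))‖ := by
    funext ξ
    rw [Complex.norm_exp]
    norm_num
    left
    norm_cast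
  rw [heq]
  exact h

theorem stmt_16 (n : ℕ) (hn : 1 ≤ n) (lam μ α C₀ : ℝ) (hlam0 : 0 < lam) (hlam1 : lam < 1)
    (hμ : 0 < μ) (hα : 0 ≤ α) (hC₀ : 0 < C₀) :
    ∃ C > (0:ℝ), ∀ t ≥ (0:ℝ),
      Real.exp (-C₀ * (1 + t) ^ (1 - lam)) *
          (∫ ξ in {ξ : EuclideanSpace ℝ (Fin n) |
              μ / 4 * (1 + t) ^ (-lam) ≤ ‖ξ‖ ∧ ‖ξ‖ ≤ 1},
            ‖ξ‖ ^ α *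
              Real.exp (C₀ * (1 - ‖ξ‖ ^ 2) * ((4 / μ * ‖ξ‖) ^ (-(1 / lam))) ^ (1 - lam)))
        ≤ C * (1 + t) ^ (-((1 - lam) * (n + α) / 2)) := by
  obtain ⟨K, hK, hKle⟩ := aux_rpow_le_exp α hα
  have hπ : (0:ℝ) < 2 * Real.pi := by positivity
  refine ⟨K * (2 * Real.pi) ^ ((n:ℝ) / 2) * C₀ ^ (-(((n:ℝ) + α) / 2)), by positivity, ?_⟩
  intro t ht
  have h1t : (0:ℝ) < 1 + t := by linarith
  set b : ℝ := C₀ * (1 + t) ^ (1 - lam) with hbdef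
  have hb : 0 < b := mul_pos hC₀ (Real.rpow_pos_of_pos h1t _)
  set S : Set (EuclideanSpace ℝ (Fin n)) :=
    {ξ : EuclideanSpace ℝ (Fin n) | μ / 4 * (1 + t) ^ (-lam) ≤ ‖ξ‖ ∧ ‖ξ‖ ≤ 1} with hSdef
  have hS : MeasurableSet S := by
    rw [hSdef, Set.setOf_and]
    exact (measurableSet_le measurable_const measurable_norm).inter
      (measurableSet_le measurable_norm measurable_const)
  set g : EuclideanSpace ℝ (Fin n) → ℝ := fun ξ =>
    Real.exp (-C₀ * (1 + t) ^ (1 - lam)) *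
      (‖ξ‖ ^ α * Real.exp (C₀ * (1 - ‖ξ‖ ^ 2) *
        ((4 / μ * ‖ξ‖) ^ (-(1 / lam))) ^ (1 - lam))) with hgdef
  have hgnonneg : ∀ ξ, 0 ≤ g ξ := by
    intro ξ
    rw [hgdef]
    positivity
  set M : EuclideanSpace ℝ (Fin n) → ℝ := fun ξ =>
    K * b ^ (-(α / 2)) * Real.exp (-(b / 2) * ‖ξ‖ ^ 2) with hMdef
  have hMint : Integrable M := by
    rw [hMdef]
    exact (aux_gaussian_integrable n (half_pos hb)).const_mul _
  -- pointwise bound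
  have hptwise : ∀ ξ, Set.indicator S g ξ ≤ M ξ := by
    intro ξ
    by_cases hmem : ξ ∈ S
    · rw [Set.indicator_of_mem hmem]
      obtain ⟨hξ1, hξ2⟩ := hmem
      have hnorm : (0:ℝ) ≤ ‖ξ‖ := norm_nonneg _
      -- step A : inner exponent bound
      have hx0 : (0:ℝ) < (1 + t) ^ (-lam) := Real.rpow_pos_of_pos h1t _
      have h4 : (1 + t) ^ (-lam) ≤ 4 / μ * ‖ξ‖ := by
        have h40 : (0:ℝ) < 4 / μ := by positivity
        calc (1 + t) ^ (-lam) = 4 / μ * (μ / 4 * (1 + t) ^ (-lam)) := by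
              field_simp
          _ ≤ 4 / μ * ‖ξ‖ := mul_le_mul_of_nonneg_left hξ1 h40.le
      have h5 : (4 / μ * ‖ξ‖) ^ (-(1 / lam)) ≤ ((1 + t) ^ (-lam)) ^ (-(1 / lam)) :=
        Real.rpow_le_rpow_of_nonpos hx0 h4 (neg_nonpos.mpr (by positivity))
      have h6 : ((1 + t) ^ (-lam)) ^ (-(1 / lam)) = 1 + t := by
        rw [← Real.rpow_mul h1t.le]
        have : -lam * -(1 / lam) = 1 := by field_simp
        rw [this, Real.rpow_one]
      have hA : ((4 / μ * ‖ξ‖) ^ (-(1 / lam))) ^ (1 - lam) ≤ (1 + t) ^ (1 - lam) :=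
        Real.rpow_le_rpow (Real.rpow_nonneg (by positivity) _)
          (h5.trans_eq h6) (by linarith)
      have hsq : ‖ξ‖ ^ 2 ≤ 1 := by nlinarith
      have hBcoef : (0:ℝ) ≤ C₀ * (1 - ‖ξ‖ ^ 2) := by nlinarith
      have hB : C₀ * (1 - ‖ξ‖ ^ 2) * ((4 / μ * ‖ξ‖) ^ (-(1 / lam))) ^ (1 - lam) ≤
          C₀ * (1 - ‖ξ‖ ^ 2) * (1 + t) ^ (1 - lam) :=
        mul_le_mul_of_nonneg_left hA hBcoef
      have step1 : g ξ ≤ ‖ξ‖ ^ α * Real.exp (-b * ‖ξ‖ ^ 2) := by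
        rw [hgdef]
        have : Real.exp (-C₀ * (1 + t) ^ (1 - lam)) *
            (‖ξ‖ ^ α * Real.exp (C₀ * (1 - ‖ξ‖ ^ 2) *
              ((4 / μ * ‖ξ‖) ^ (-(1 / lam))) ^ (1 - lam))) ≤
            Real.exp (-C₀ * (1 + t) ^ (1 - lam)) *
            (‖ξ‖ ^ α * Real.exp (C₀ * (1 - ‖ξ‖ ^ 2) * (1 + t) ^ (1 - lam))) := by
          apply mul_le_mul_of_nonneg_left _ (Real.exp_nonneg _)
          exact mul_le_mul_of_nonneg_left (Real.exp_le_exp.mpr hB) (Real.rpow_nonneg hnorm _)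
        refine this.trans_eq ?_
        rw [mul_comm (Real.exp _) _, mul_assoc, ← Real.exp_add, hbdef]
        congr 2
        ring
      -- step C
      have hu := hKle (Real.sqrt b * ‖ξ‖) (by positivity)
      have h7 : (Real.sqrt b * ‖ξ‖) ^ α = b ^ (α / 2) * ‖ξ‖ ^ α := by
        rw [Real.mul_rpow (Real.sqrt_nonneg _) hnorm, Real.sqrt_eq_rpow,
          ← Real.rpow_mul hb.le, show (1:ℝ) / 2 * α = α / 2 by ring]
      have h8 : (Real.sqrt b * ‖ξ‖) ^ 2 = b * ‖ξ‖ ^ 2 := by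
        rw [mul_pow, Real.sq_sqrt hb.le]
      rw [h7, h8] at hu
      have h9 : ‖ξ‖ ^ α = b ^ (-(α / 2)) * (b ^ (α / 2) * ‖ξ‖ ^ α) := by
        rw [← mul_assoc, ← Real.rpow_add hb]
        norm_num
      have step2 : ‖ξ‖ ^ α * Real.exp (-b * ‖ξ‖ ^ 2) ≤ M ξ := by
        rw [hMdef]
        calc ‖ξ‖ ^ α * Real.exp (-b * ‖ξ‖ ^ 2)
            = b ^ (-(α / 2)) * ((b ^ (α / 2) * ‖ξ‖ ^ α) * Real.exp (-b * ‖ξ‖ ^ 2)) := by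
              conv_lhs => rw [h9]
              ring
          _ ≤ b ^ (-(α / 2)) * ((K * Real.exp (b * ‖ξ‖ ^ 2 / 2)) * Real.exp (-b * ‖ξ‖ ^ 2)) := by
              apply mul_le_mul_of_nonneg_left _ (Real.rpow_nonneg hb.le _)
              exact mul_le_mul_of_nonneg_right hu (Real.exp_nonneg _)
          _ = K * b ^ (-(α / 2)) * Real.exp (-(b / 2) * ‖ξ‖ ^ 2) := by
              rw [mul_assoc K, ← Real.exp_add,
                show b * ‖ξ‖ ^ 2 / 2 + -b * ‖ξ‖ ^ 2 = -(b / 2) * ‖ξ‖ ^ 2 by ring]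
              ring
      exact step1.trans step2
    · rw [Set.indicator_of_notMem hmem, hMdef]
      positivity
  -- assemble
  have key : Real.exp (-C₀ * (1 + t) ^ (1 - lam)) *
      (∫ ξ in S, ‖ξ‖ ^ α * Real.exp (C₀ * (1 - ‖ξ‖ ^ 2) *
        ((4 / μ * ‖ξ‖) ^ (-(1 / lam))) ^ (1 - lam))) ≤ ∫ ξ, M ξ := by
    rw [← MeasureTheory.integral_const_mul]
    have heq : (∫ ξ in S, Real.exp (-C₀ * (1 + t) ^ (1 - lam)) *
        (‖ξ‖ ^ α * Real.exp (C₀ * (1 - ‖ξ‖ ^ 2) *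
          ((4 / μ * ‖ξ‖) ^ (-(1 / lam))) ^ (1 - lam)))) =
        ∫ ξ, Set.indicator S g ξ := (integral_indicator hS).symm
    rw [heq]
    exact integral_mono_of_nonneg
      (Filter.Eventually.of_forall fun ξ =>
        Set.indicator_nonneg (fun ξ _ => hgnonneg ξ) ξ)
      hMint (Filter.Eventually.of_forall hptwise)
  refine key.trans ?_
  -- compute the Gaussian integral
  have hint : ∫ ξ, M ξ =
      K * b ^ (-(α / 2)) * (Real.pi / (b / 2)) ^ ((n:ℝ) / 2) := by
    simp only [hMdef]
    rw [MeasureTheory.integral_const_mul,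
      GaussianFourier.integral_rexp_neg_mul_sq_norm (half_pos hb)]
    norm_num [finrank_euclideanSpace_fin]
  rw [hint]
  -- final algebra
  have e1 : (Real.pi / (b / 2)) ^ ((n:ℝ) / 2) =
      (2 * Real.pi) ^ ((n:ℝ) / 2) * b ^ (-((n:ℝ) / 2)) := by
    rw [show Real.pi / (b / 2) = 2 * Real.pi / b by field_simp,
      Real.div_rpow hπ.le hb.le, Real.rpow_neg hb.le, div_eq_mul_inv]
  have e2 : b ^ (-(α / 2)) * b ^ (-((n:ℝ) / 2)) = b ^ (-(((n:ℝ) + α) / 2)) := by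
    rw [← Real.rpow_add hb]
    congr 1
    ring
  have e3 : b ^ (-(((n:ℝ) + α) / 2)) =
      C₀ ^ (-(((n:ℝ) + α) / 2)) * (1 + t) ^ (-((1 - lam) * (n + α) / 2)) := by
    rw [hbdef, Real.mul_rpow hC₀.le (Real.rpow_nonneg h1t.le _),
      ← Real.rpow_mul h1t.le]
    congr 2
    ring
  calc K * b ^ (-(α / 2)) * (Real.pi / (b / 2)) ^ ((n:ℝ) / 2)
      = K * (2 * Real.pi) ^ ((n:ℝ) / 2) * (b ^ (-(α / 2)) * b ^ (-((n:ℝ) / 2))) := by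
        rw [e1]; ring
    _ = K * (2 * Real.pi) ^ ((n:ℝ) / 2) * C₀ ^ (-(((n:ℝ) + α) / 2)) *
          (1 + t) ^ (-((1 - lam) * (n + α) / 2)) := by
        rw [e2, e3]; ring
    _ ≤ _ := le_refl _
end
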